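/- Let K_j = 10^(2^j). There is no δ > 0 such that simultaneously: (a) 3^{−f_3(K_{6n+2})}·7^{−f_7(K_{6n+2})}·5^{−K_{6n+2}+f_3(K_{6n+2})+f_7(K_{6n+2})} ≤ δ < 3^{−f_3(K_{6n})}·7^{−f_7(K_{6n})}·5^{−K_{6n}+f_3(K_{6n})+f_7(K_{6n})} for some n ∈ ℕ; and (b) 3^{−g_3(K_{6m+5})}·7^{−g_7(K_{6m+5})}·5^{−K_{6m+5}+g_3(K_{6m+5})+g_7(K_{6m+5})} ≤ δ < 3^{−g_3(K_{6m+3})}·7^{−g_7(K_{6m+3})}·5^{−K_{6m+3}+g_3(K_{6m+3})+g_7(K_{6m+3})} for some m ∈ ℕ. -/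
import Mathlib


open Filter Topology

/-- The doubly exponential sequence `K j = 10 ^ (2 ^ j)`. -/
def K (j : ℕ) : ℕ := 10 ^ (2 ^ j)

open scoped Classical in
/-- `f3 j` : the number of stages `i ≤ j` lying in some interval `(K (6n), K (6n+1)]`,
i.e. at which the ratio `1/3` is applied in the construction of `F`. -/
noncomputable def f3 (j : ℕ) : ℕ :=
  ((Finset.range (j + 1)).filter fun i => ∃ n : ℕ, K (6 * n) < i ∧ i ≤ K (6 * n + 1)).card

open scoped Classical in
/-- `f7 j` : the number of stages `i ≤ j` lying in some interval `(K (6n+1), K (6n+2)]`. -/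
noncomputable def f7 (j : ℕ) : ℕ :=
  ((Finset.range (j + 1)).filter fun i => ∃ n : ℕ, K (6 * n + 1) < i ∧ i ≤ K (6 * n + 2)).card

open scoped Classical in
/-- `g3 j` : the number of stages `i ≤ j` lying in some interval `(K (6m+3), K (6m+4)]`. -/
noncomputable def g3 (j : ℕ) : ℕ :=
  ((Finset.range (j + 1)).filter fun i => ∃ m : ℕ, K (6 * m + 3) < i ∧ i ≤ K (6 * m + 4)).card

open scoped Classical in
/-- `g7 j` : the number of stages `i ≤ j` lying in some interval `(K (6m+4), K (6m+5)]`. -/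
noncomputable def g7 (j : ℕ) : ℕ :=
  ((Finset.range (j + 1)).filter fun i => ∃ m : ℕ, K (6 * m + 4) < i ∧ i ≤ K (6 * m + 5)).card

lemma K_mono : StrictMono K := fun _ _ h =>
  Nat.pow_lt_pow_right (by norm_num) (Nat.pow_lt_pow_right (by norm_num) h)

lemma ten_le_K (j : ℕ) : 10 ≤ K j := by
  have : (10:ℕ)^1 ≤ 10 ^ (2 ^ j) :=
    Nat.pow_le_pow_right (by norm_num) (Nat.one_le_two_pow)
  simpa [K] using this

lemma two_mul_K_le (j : ℕ) : 2 * K j ≤ K (j + 1) := by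
  have h : K (j+1) = K j * K j := by
    simp [K, pow_succ, pow_mul]
  have := ten_le_K j
  nlinarith

lemma cross (p q : ℕ) (h : 2 * q ≤ p) : (3:ℝ)^(-(p:ℤ)) ≤ (7:ℝ)^(-(q:ℤ)) := by
  rw [zpow_neg, zpow_neg, zpow_natCast, zpow_natCast]
  apply inv_anti₀ (by positivity)
  calc (7:ℝ)^q ≤ 9^q := by gcongr <;> norm_num
    _ = 3^(2*q) := by rw [pow_mul]; norm_num
    _ ≤ 3^p := by gcongr <;> norm_num

lemma rho_le (a b j : ℕ) (h : a + b ≤ j) :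
    (3:ℝ)^(-(a:ℤ)) * (7:ℝ)^(-(b:ℤ)) * (5:ℝ)^(-(j:ℤ)+a+b) ≤ (3:ℝ)^(-(j:ℤ)) := by
  have hc : (-(j:ℤ)+a+b) = -((j-a-b : ℕ):ℤ) := by omega
  rw [hc, zpow_neg, zpow_neg, zpow_neg, zpow_neg, zpow_natCast, zpow_natCast,
    zpow_natCast, zpow_natCast, ← mul_inv, ← mul_inv]
  apply inv_anti₀ (by positivity)
  calc (3:ℝ)^j = 3^a * 3^b * 3^(j-a-b) := by
        rw [← pow_add, ← pow_add]; congr 1; omega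
    _ ≤ 3^a * 7^b * 5^(j-a-b) := by gcongr <;> norm_num

lemma rho_ge (a b j : ℕ) (h : a + b ≤ j) :
    (7:ℝ)^(-(j:ℤ)) ≤ (3:ℝ)^(-(a:ℤ)) * (7:ℝ)^(-(b:ℤ)) * (5:ℝ)^(-(j:ℤ)+a+b) := by
  have hc : (-(j:ℤ)+a+b) = -((j-a-b : ℕ):ℤ) := by omega
  rw [hc, zpow_neg, zpow_neg, zpow_neg, zpow_neg, zpow_natCast, zpow_natCast,
    zpow_natCast, zpow_natCast, ← mul_inv, ← mul_inv]
  apply inv_anti₀ (by positivity)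
  calc (3:ℝ)^a * 7^b * 5^(j-a-b) ≤ 7^a * 7^b * 7^(j-a-b) := by gcongr <;> norm_num
    _ = 7^j := by rw [← pow_add, ← pow_add]; congr 1; omega

lemma sum_le_aux (P Q : ℕ → Prop) [DecidablePred P] [DecidablePred Q]
    (hd : ∀ i, P i → Q i → False) (h0 : ¬ P 0) (h0' : ¬ Q 0) (j : ℕ) :
    ((Finset.range (j+1)).filter P).card + ((Finset.range (j+1)).filter Q).card ≤ j := by
  rw [← Finset.card_union_of_disjoint (by
    rw [Finset.disjoint_left]
    intro i hi hi'
    exact hd i (Finset.mem_filter.mp hi).2 (Finset.mem_filter.mp hi').2)]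
  calc _ ≤ (Finset.Ioc 0 j).card := by
        apply Finset.card_le_card
        intro i hi
        simp only [Finset.mem_union, Finset.mem_filter, Finset.mem_range] at hi
        rw [Finset.mem_Ioc]
        rcases hi with ⟨hr, hp⟩ | ⟨hr, hp⟩ <;>
          exact ⟨Nat.pos_of_ne_zero (fun h => by subst h; tauto), by omega⟩
    _ = j := by simp

lemma f_sum_le (j : ℕ) : f3 j + f7 j ≤ j := by
  classical
  unfold f3 f7
  refine sum_le_aux _ _ ?_ ?_ ?_ j
  · rintro i ⟨n, h1, h2⟩ ⟨n', h1', h2'⟩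
    rcases le_or_gt n n' with h | h
    · have := K_mono.le_iff_le.mpr (show 6*n+1 ≤ 6*n'+1 by omega)
      omega
    · have := K_mono.le_iff_le.mpr (show 6*n'+2 ≤ 6*n by omega)
      omega
  · rintro ⟨n, h1, h2⟩
    omega
  · rintro ⟨n, h1, h2⟩
    omega

lemma g_sum_le (j : ℕ) : g3 j + g7 j ≤ j := by
  classical
  unfold g3 g7
  refine sum_le_aux _ _ ?_ ?_ ?_ j
  · rintro i ⟨n, h1, h2⟩ ⟨n', h1', h2'⟩
    rcases le_or_gt n n' with h | h
    · have := K_mono.le_iff_le.mpr (show 6*n+4 ≤ 6*n'+4 by omega)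
      omega
    · have := K_mono.le_iff_le.mpr (show 6*n'+5 ≤ 6*n+3 by omega)
      omega
  · rintro ⟨n, h1, h2⟩
    omega
  · rintro ⟨n, h1, h2⟩
    omega

theorem no_common_length_scale :
    ¬ ∃ δ : ℝ, 0 < δ ∧
      (∃ n : ℕ,
        (3:ℝ) ^ (-(f3 (K (6 * n + 2)) : ℤ)) * (7:ℝ) ^ (-(f7 (K (6 * n + 2)) : ℤ)) *
            (5:ℝ) ^ (-(K (6 * n + 2) : ℤ) + (f3 (K (6 * n + 2)) : ℤ) + (f7 (K (6 * n + 2)) : ℤ))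
          ≤ δ ∧
        δ < (3:ℝ) ^ (-(f3 (K (6 * n)) : ℤ)) * (7:ℝ) ^ (-(f7 (K (6 * n)) : ℤ)) *
            (5:ℝ) ^ (-(K (6 * n) : ℤ) + (f3 (K (6 * n)) : ℤ) + (f7 (K (6 * n)) : ℤ))) ∧
      (∃ m : ℕ,
        (3:ℝ) ^ (-(g3 (K (6 * m + 5)) : ℤ)) * (7:ℝ) ^ (-(g7 (K (6 * m + 5)) : ℤ)) *
            (5:ℝ) ^ (-(K (6 * m + 5) : ℤ) + (g3 (K (6 * m + 5)) : ℤ) + (g7 (K (6 * m + 5)) : ℤ))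
          ≤ δ ∧
        δ < (3:ℝ) ^ (-(g3 (K (6 * m + 3)) : ℤ)) * (7:ℝ) ^ (-(g7 (K (6 * m + 3)) : ℤ)) *
            (5:ℝ) ^ (-(K (6 * m + 3) : ℤ) + (g3 (K (6 * m + 3)) : ℤ) + (g7 (K (6 * m + 3)) : ℤ))) := by
  rintro ⟨δ, -, ⟨n, hF1, hF2⟩, ⟨m, hG1, hG2⟩⟩
  rcases le_or_gt n m with hnm | hmn
  · -- δ ≥ ρF(K(6n+2)) ≥ 7^{-K(6n+2)} ≥ 3^{-K(6m+3)} ≥ ρG(K(6m+3)) > δ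
    have h1 : (7:ℝ)^(-(K (6*n+2) : ℤ)) ≤ δ :=
      le_trans (rho_ge _ _ _ (f_sum_le _)) hF1
    have h2 : δ < (3:ℝ)^(-(K (6*m+3) : ℤ)) :=
      lt_of_lt_of_le hG2 (rho_le _ _ _ (g_sum_le _))
    have h3 : (3:ℝ)^(-(K (6*m+3) : ℤ)) ≤ (7:ℝ)^(-(K (6*n+2) : ℤ)) := by
      apply cross
      calc 2 * K (6*n+2) ≤ K (6*n+3) := two_mul_K_le _
        _ ≤ K (6*m+3) := K_mono.monotone (by omega)
    linarith
  · -- m < n : δ ≥ ρG(K(6m+5)) ≥ 7^{-K(6m+5)} ≥ 3^{-K(6n)} ≥ ρF(K(6n)) > δ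
    have h1 : (7:ℝ)^(-(K (6*m+5) : ℤ)) ≤ δ :=
      le_trans (rho_ge _ _ _ (g_sum_le _)) hG1
    have h2 : δ < (3:ℝ)^(-(K (6*n) : ℤ)) :=
      lt_of_lt_of_le hF2 (rho_le _ _ _ (f_sum_le _))
    have h3 : (3:ℝ)^(-(K (6*n) : ℤ)) ≤ (7:ℝ)^(-(K (6*m+5) : ℤ)) := by
      apply cross
      calc 2 * K (6*m+5) ≤ K (6*m+6) := two_mul_K_le _
        _ ≤ K (6*n) := K_mono.monotone (by omega)
    linarith
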